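/- arXiv:2601.10842 — 4 statements merged into one kernel-verified Lean document; each statement's English description precedes it below -/
import Mathlib

section
/- Let G be a closed graph on {1,...,n} with no clique of size 4. If {i,j,k} and {i',j',k'} are two triangles of G with i<j<k and i'<j'<k', and (i,j,k) ≠ (i',j',k'), then i ≠ i' and ({j,k} ≠ {j',k'}). -/
lemma aux_K4 (n : ℕ) (G : SimpleGraph (Fin n))
    (hclosed : ∀ i j k : Fin n, i < j → j < k → G.Adj i k → G.Adj i j ∧ G.Adj j k)
    (hK4free : ∀ s : Finset (Fin n), ¬ G.IsNClique 4 s)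
    (a b j k : Fin n) (hab : a < b) (hbj : b < j) (hjk : j < k)
    (haj : G.Adj a j) (hak : G.Adj a k) (hbj' : G.Adj b j) (hbk : G.Adj b k) :
    False := by
  have hAB : G.Adj a b := (hclosed a b j hab hbj haj).1
  have hJK : G.Adj j k := (hclosed b j k hbj hjk hbk).2
  apply hK4free {a, b, j, k}
  constructor
  · intro x hx y hy hxy
    simp only [Finset.coe_insert, Set.mem_insert_iff, Finset.coe_singleton,
      Set.mem_singleton_iff] at hx hy
    rcases hx with rfl | rfl | rfl | rfl <;> rcases hy with rfl | rfl | rfl | rfl <;>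
      first
      | exact absurd rfl hxy
      | assumption
      | exact hAB.symm
      | exact hJK.symm
      | exact haj.symm
      | exact hak.symm
      | exact hbj'.symm
      | exact hbk.symm
  · have h1 : a ≠ b := ne_of_lt hab
    have h2 : a ≠ j := ne_of_lt (hab.trans hbj)
    have h3 : a ≠ k := ne_of_lt ((hab.trans hbj).trans hjk)
    have h4 : b ≠ j := ne_of_lt hbj
    have h5 : b ≠ k := ne_of_lt (hbj.trans hjk)
    have h6 : j ≠ k := ne_of_lt hjk
    simp [Finset.card_insert_of_notMem, h1, h2, h3, h4, h5, h6]

/-- In a closed graph with no clique of size 4, two distinct triangles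
`{i<j<k}`, `{i'<j'<k'}` satisfy `i ≠ i'` and `{j,k} ≠ {j',k'}`. -/
theorem closed_K4free_distinct_triangles
    (n : ℕ) (G : SimpleGraph (Fin n))
    (hclosed : ∀ i j k : Fin n, i < j → j < k → G.Adj i k → G.Adj i j ∧ G.Adj j k)
    (hK4free : ∀ s : Finset (Fin n), ¬ G.IsNClique 4 s)
    (i j k i' j' k' : Fin n)
    (hij : i < j) (hjk : j < k) (hij' : i' < j') (hjk' : j' < k')
    (h1 : G.Adj i j) (h2 : G.Adj i k) (h3 : G.Adj j k)
    (h1' : G.Adj i' j') (h2' : G.Adj i' k') (h3' : G.Adj j' k')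
    (hne : (i, j, k) ≠ (i', j', k')) :
    i ≠ i' ∧ ({j, k} : Finset (Fin n)) ≠ ({j', k'} : Finset (Fin n)) := by
  constructor
  · rintro rfl
    have keys : ∀ x y : Fin n, i < x → i < y → G.Adj i x → G.Adj i y → x ≠ y → G.Adj x y := by
      intro x y hx hy ax ay hxy
      rcases lt_trichotomy x y with h | h | h
      · exact (hclosed i x y hx h ay).2
      · exact absurd h hxy
      · exact ((hclosed i y x hy h ax).2).symm
    have hnew : j' ∉ ({j, k} : Finset (Fin n)) ∨ k' ∉ ({j, k} : Finset (Fin n)) := by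
      by_contra hc
      push_neg at hc
      obtain ⟨ha, hb⟩ := hc
      simp only [Finset.mem_insert, Finset.mem_singleton] at ha hb
      rcases ha with rfl | rfl
      · rcases hb with rfl | rfl
        · exact lt_irrefl _ hjk'
        · exact hne rfl
      · rcases hb with rfl | rfl
        · exact (hjk.trans hjk').false
        · exact lt_irrefl _ hjk'
    have mkclique : ∀ x : Fin n, i < x → G.Adj i x → x ∉ ({j, k} : Finset (Fin n)) → False := by
      intro x hix hax hx
      simp only [Finset.mem_insert, Finset.mem_singleton, not_or] at hx
      obtain ⟨hxj, hxk⟩ := hx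
      have ajx : G.Adj j x := keys j x hij hix h1 hax (Ne.symm hxj)
      have akx : G.Adj k x := keys k x (hij.trans hjk) hix h2 hax (Ne.symm hxk)
      apply hK4free {i, j, k, x}
      constructor
      · intro a ha b hb hab
        simp only [Finset.coe_insert, Set.mem_insert_iff, Finset.coe_singleton,
          Set.mem_singleton_iff] at ha hb
        rcases ha with rfl | rfl | rfl | rfl <;> rcases hb with rfl | rfl | rfl | rfl <;>
          first
          | exact absurd rfl hab
          | assumption
          | exact h1.symm
          | exact h2.symm
          | exact h3.symm
          | exact hax.symm
          | exact ajx.symm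
          | exact akx.symm
      · have e1 : i ≠ j := ne_of_lt hij
        have e2 : i ≠ k := ne_of_lt (hij.trans hjk)
        have e3 : i ≠ x := ne_of_lt hix
        have e4 : j ≠ k := ne_of_lt hjk
        simp [Finset.card_insert_of_notMem, e1, e2, e3, e4, Ne.symm hxj, Ne.symm hxk]
    rcases hnew with hx | hx
    · exact mkclique j' hij' h1' hx
    · exact mkclique k' (hij'.trans hjk') h2' hx
  · intro hset
    have hj' : j = j' ∧ k = k' := by
      have hjm : j ∈ ({j', k'} : Finset (Fin n)) := by rw [← hset]; simp
      have hkm : k ∈ ({j', k'} : Finset (Fin n)) := by rw [← hset]; simp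
      have hjm' : j' ∈ ({j, k} : Finset (Fin n)) := by rw [hset]; simp
      have hkm' : k' ∈ ({j, k} : Finset (Fin n)) := by rw [hset]; simp
      simp only [Finset.mem_insert, Finset.mem_singleton] at hjm hkm hjm' hkm'
      rcases hjm with h | h
      · refine ⟨h, ?_⟩
        rcases hkm with hk2 | hk2
        · exfalso; rw [h, hk2] at hjk; exact lt_irrefl _ hjk
        · exact hk2
      · exfalso
        rcases hjm' with hk2 | hk2
        · rw [hk2, ← h] at hjk'; exact lt_irrefl _ hjk'
        · rw [hk2, ← h] at hjk'; exact (hjk.trans hjk').false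
    obtain ⟨rfl, rfl⟩ := hj'
    have hii : i ≠ i' := fun h => hne (by rw [h])
    rcases lt_or_gt_of_ne hii with h | h
    · exact aux_K4 n G hclosed hK4free i i' j k h hij' hjk h1 h2 h1' h2'
    · exact aux_K4 n G hclosed hK4free i' i j k h hij hjk h1' h2' h1 h2
end

section
/- Let G be a closed graph on {1,...,n} with no clique of size 4. In the polynomial ring S = K[x_1,...,x_n, y_1,...,y_n, T_e : e ∈ E(G)], the set of monomials L = { x_i·T_{jk}, y_j·T_{ik} : {i,j,k} a triangle of G with i<j<k } consists of pairwise coprime monomials. -/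
open MvPolynomial

/-- Variables of the ring `S = K[x_1,…,x_n, y_1,…,y_n, T_e : e ∈ E(G)]`:
`x i` is `Sum.inl (Sum.inl i)`, `y i` is `Sum.inl (Sum.inr i)` and the `T`
variables are indexed by the (ordered) edges of `G`. -/
abbrev ReesVars (n : ℕ) (G : SimpleGraph (Fin n)) : Type :=
  (Fin n ⊕ Fin n) ⊕ {e : Fin n × Fin n // G.Adj e.1 e.2}

/-- The set `L = { x_i T_{jk}, y_j T_{ik} : {i,j,k} a triangle of G, i<j<k }`. -/
def ENLeadMonomials {K : Type*} [Field K] (n : ℕ) (G : SimpleGraph (Fin n)) :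
    Set (MvPolynomial (ReesVars n G) K) :=
  {p | ∃ (i j k : Fin n) (_ : G.Adj i j) (_ : G.Adj i k) (hjk : G.Adj j k)
        (hik : G.Adj i k), i < j ∧ j < k ∧
      (p = X (Sum.inl (Sum.inl i)) * X (Sum.inr ⟨(j, k), hjk⟩) ∨
       p = X (Sum.inl (Sum.inr j)) * X (Sum.inr ⟨(i, k), hik⟩))}

lemma X_dvd_X_mul_X {σ K : Type*} [Field K] {v a b : σ}
    (h : (X v : MvPolynomial σ K) ∣ X a * X b) : v = a ∨ v = b := by
  rw [show (X a : MvPolynomial σ K) * X b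
        = monomial (Finsupp.single a 1 + Finsupp.single b 1) 1 by
      rw [X, X, monomial_mul, one_mul], X_dvd_monomial] at h
  rcases h with h | h
  · exact absurd h one_ne_zero
  · by_contra hc
    push_neg at hc
    apply h
    simp [Finsupp.single_apply, Ne.symm hc.1, Ne.symm hc.2]

lemma clique4 {n : ℕ} {G : SimpleGraph (Fin n)} {a b c d : Fin n}
    (hab : G.Adj a b) (hac : G.Adj a c) (had : G.Adj a d)
    (hbc : G.Adj b c) (hbd : G.Adj b d) (hcd : G.Adj c d) :
    G.IsNClique 4 {a, b, c, d} := by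
  constructor
  · intro x hx y hy hxy
    simp only [Finset.coe_insert, Set.mem_insert_iff, Finset.coe_singleton,
      Set.mem_singleton_iff] at hx hy
    rcases hx with rfl | rfl | rfl | rfl <;> rcases hy with rfl | rfl | rfl | rfl <;>
      first
        | exact absurd rfl hxy
        | assumption
        | exact hab.symm | exact hac.symm | exact had.symm
        | exact hbc.symm | exact hbd.symm | exact hcd.symm
  · rw [Finset.card_insert_of_notMem (by simp [hab.ne, hac.ne, had.ne]),
      Finset.card_insert_of_notMem (by simp [hbc.ne, hbd.ne]),
      Finset.card_insert_of_notMem (by simp [hcd.ne]), Finset.card_singleton]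

/-- For a closed graph with no clique of size 4, the monomials in `L`
are pairwise coprime: no variable divides two distinct members of `L`. -/
theorem EN_lead_monomials_pairwise_coprime {K : Type*} [Field K]
    (n : ℕ) (G : SimpleGraph (Fin n))
    (hclosed : ∀ i j k : Fin n, i < j → j < k → G.Adj i k → G.Adj i j ∧ G.Adj j k)
    (hK4free : ∀ s : Finset (Fin n), ¬ G.IsNClique 4 s) :
    ∀ p ∈ ENLeadMonomials (K := K) n G, ∀ q ∈ ENLeadMonomials (K := K) n G,
      p ≠ q → ∀ v : ReesVars n G, ¬ (X v ∣ p ∧ X v ∣ q) := by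
  intro p hp q hq hpq v hv
  obtain ⟨hvp, hvq⟩ := hv
  obtain ⟨i, j, k, hij, -, hjk, hik, h1, h2, hpe⟩ := hp
  obtain ⟨a, b, c, hab, -, hbc, hac, h3, h4, hqe⟩ := hq
  rcases hpe with rfl | rfl <;> rcases hqe with rfl | rfl
  · -- p = x_i T_{jk}, q = x_a T_{bc}
    rcases X_dvd_X_mul_X hvp with rfl | rfl
    · rcases X_dvd_X_mul_X hvq with hv | hv
      · simp only [Sum.inl.injEq] at hv
        subst hv
        rcases lt_trichotomy k c with hkc | rfl | hck
        · exact hK4free _ (clique4 hij hik hac hjk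
            (hclosed i j c h1 (h2.trans hkc) hac).2
            (hclosed i k c (h1.trans h2) hkc hac).2)
        · rcases lt_trichotomy j b with hjb | rfl | hbj
          · exact hK4free _ (clique4 hij hab hik (hclosed i j b h1 hjb hab).2 hjk hbc)
          · exact hpq rfl
          · exact hK4free _ (clique4 hab hij hik (hclosed i b j h3 hbj hij).2 hbc hjk)
        · exact hK4free _ (clique4 hab hac hik hbc
            (hclosed i b k h3 (h4.trans hck) hik).2
            (hclosed i c k (h3.trans h4) hck hik).2)
      · simp at hv
    · rcases X_dvd_X_mul_X hvq with hv | hv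
      · simp at hv
      · simp only [Sum.inr.injEq, Subtype.mk.injEq, Prod.mk.injEq] at hv
        obtain ⟨rfl, rfl⟩ := hv
        rcases lt_trichotomy i a with hia | rfl | hai
        · exact hK4free _ (clique4 (hclosed i a j hia h3 hij).1 hij hik
            (hclosed i a j hia h3 hij).2
            (hclosed i a k hia (h3.trans h4) hik).2 hjk)
        · exact hpq rfl
        · exact hK4free _ (clique4 (hclosed a i j hai h1 hab).1 hab hac hij hik hjk)
  · -- p = x_i T_{jk}, q = y_b T_{ac}
    rcases X_dvd_X_mul_X hvp with rfl | rfl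
    · rcases X_dvd_X_mul_X hvq with hv | hv <;> simp at hv
    · rcases X_dvd_X_mul_X hvq with hv | hv
      · simp at hv
      · simp only [Sum.inr.injEq, Subtype.mk.injEq, Prod.mk.injEq] at hv
        obtain ⟨rfl, rfl⟩ := hv
        exact hK4free _ (clique4 hij (hclosed i b k (h1.trans h3) h4 hik).1 hik hab hjk hbc)
  · -- p = y_j T_{ik}, q = x_a T_{bc}
    rcases X_dvd_X_mul_X hvp with rfl | rfl
    · rcases X_dvd_X_mul_X hvq with hv | hv <;> simp at hv
    · rcases X_dvd_X_mul_X hvq with hv | hv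
      · simp at hv
      · simp only [Sum.inr.injEq, Subtype.mk.injEq, Prod.mk.injEq] at hv
        obtain ⟨rfl, rfl⟩ := hv
        exact hK4free _ (clique4 hab (hclosed a j k (h3.trans h1) h2 hac).1 hac hij hik hjk)
  · -- p = y_j T_{ik}, q = y_b T_{ac}
    rcases X_dvd_X_mul_X hvp with rfl | rfl
    · rcases X_dvd_X_mul_X hvq with hv | hv
      · simp only [Sum.inl.injEq, Sum.inr.injEq] at hv
        subst hv
        rcases lt_trichotomy k c with hkc | rfl | hck
        · exact hK4free _ (clique4 hab (hclosed a k c (h3.trans h2) hkc hac).1 hac hjk hbc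
            (hclosed a k c (h3.trans h2) hkc hac).2)
        · rcases lt_trichotomy i a with hia | rfl | hai
          · exact hK4free _ (clique4 (hclosed i a j hia h3 hij).1 hij hik hab
              (hclosed i a k hia (h3.trans h2) hik).2 hjk)
          · exact hpq rfl
          · exact hK4free _ (clique4 (hclosed a i j hai h1 hab).1 hab hac hij hik hjk)
        · exact hK4free _ (clique4 hij (hclosed i c k (h1.trans h4) hck hik).1 hik hbc hjk
            (hclosed i c k (h1.trans h4) hck hik).2)
      · simp at hv
    · rcases X_dvd_X_mul_X hvq with hv | hv
      · simp at hv
      · simp only [Sum.inr.injEq, Subtype.mk.injEq, Prod.mk.injEq] at hv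
        obtain ⟨rfl, rfl⟩ := hv
        rcases lt_trichotomy j b with hjb | rfl | hbj
        · exact hK4free _ (clique4 hij hab hik (hclosed i j b h1 hjb hab).2 hjk hbc)
        · exact hpq rfl
        · exact hK4free _ (clique4 hab hij hik (hclosed i b j h3 hbj hij).2 hbc hjk)
end

section
/- Let R be a graded K-algebra with R_0 = K and I a homogeneous ideal minimally generated by f_1,...,f_s, all of degree d. Let L be the kernel of the map R[T_1,...,T_s] → R[T] sending T_i ↦ f_i·T (the relations of the Rees algebra), bigraded with deg T_i = (1,d). Then for every m ≥ 1, the first syzygy module Ω_1(I^m) of I^m is isomorphic as a graded R-module to L_{(m,−)}/L_{(m, ≥ md)}, where L_{(m,−)} denotes the elements of L of T-degree m and L_{(m,≥md)} those of T-degree m whose R-degree components are all ≥ md. -/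
open MvPolynomial

section Aux

private lemma prod_pow_mem_pow {R : Type*} [CommRing R] {s : ℕ} {I : Ideal R} {f : Fin s → R}
    (hf : ∀ i, f i ∈ I) (t : Finset (Fin s)) (e : Fin s → ℕ) :
    (∏ i ∈ t, f i ^ e i) ∈ I ^ (∑ i ∈ t, e i) := by
  classical
  induction t using Finset.induction_on with
  | empty => simp [Ideal.one_eq_top]
  | insert _ _ hx ih =>
    rw [Finset.prod_insert hx, Finset.sum_insert hx, pow_add]
    exact Ideal.mul_mem_mul (Ideal.pow_mem_pow (hf _) _) ih

private lemma prod_pow_mem_graded {K R : Type*} [Field K] [CommRing R] [Algebra K R]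
    (𝒜 : ℕ → Submodule K R) [GradedAlgebra 𝒜] {s d0 : ℕ} {f : Fin s → R}
    (hf : ∀ i, f i ∈ 𝒜 d0) (t : Finset (Fin s)) (e : Fin s → ℕ) :
    (∏ i ∈ t, f i ^ e i) ∈ 𝒜 ((∑ i ∈ t, e i) * d0) := by
  classical
  induction t using Finset.induction_on with
  | empty =>
    simp only [Finset.prod_empty, Finset.sum_empty, zero_mul]
    exact SetLike.one_mem_graded 𝒜
  | @insert a t hx ih =>
    rw [Finset.prod_insert hx, Finset.sum_insert hx, add_mul]
    have h1 : f a ^ e a ∈ 𝒜 (e a * d0) := by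
      have := SetLike.pow_mem_graded (e a) (hf a)
      rwa [smul_eq_mul] at this
    exact SetLike.mul_mem_graded h1 ih

private lemma pow_le_span_prod {R : Type*} [CommRing R] {s : ℕ} (f : Fin s → R) :
    ∀ n : ℕ, Ideal.span (Set.range f) ^ n ≤
      Ideal.span {x : R | ∃ e : Fin s →₀ ℕ, Finsupp.degree e = n ∧
        x = e.prod fun i k => f i ^ k} := by
  intro n
  induction n with
  | zero =>
    rw [pow_zero, Ideal.one_eq_top]
    have h1 : (1 : R) ∈ {x : R | ∃ e : Fin s →₀ ℕ, Finsupp.degree e = 0 ∧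
        x = e.prod fun i k => f i ^ k} := ⟨0, map_zero _, by simp⟩
    have h2 : Ideal.span {x : R | ∃ e : Fin s →₀ ℕ, Finsupp.degree e = 0 ∧
        x = e.prod fun i k => f i ^ k} = ⊤ :=
      Ideal.eq_top_iff_one _ |>.mpr (Ideal.subset_span h1)
    rw [h2]
  | succ n ih =>
    rw [pow_succ]
    refine le_trans (Ideal.mul_mono ih le_rfl) ?_
    rw [Ideal.span_mul_span, Ideal.span_le]
    rintro x hx
    rw [Set.mem_mul] at hx
    obtain ⟨p, ⟨e, he, rfl⟩, q, ⟨i, rfl⟩, rfl⟩ := hx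
    refine Ideal.subset_span ⟨e + Finsupp.single i 1, ?_, ?_⟩
    · rw [Finsupp.degree_eq_weight_one] at he ⊢
      rw [map_add, he, Finsupp.weight_apply, Finsupp.sum_single_index] <;> simp
    · rw [Finsupp.prod_add_index' (fun a => pow_zero (f a)) (fun a b₁ b₂ => pow_add (f a) b₁ b₂),
        Finsupp.prod_single_index (h := fun a k => f a ^ k) (pow_zero (f i)), pow_one]

private lemma mem_span_K_of_graded {K R : Type*} [Field K] [CommRing R] [Algebra K R]
    (𝒜 : ℕ → Submodule K R) [GradedAlgebra 𝒜]
    (h𝒜0 : ∀ r ∈ 𝒜 0, ∃ c : K, r = algebraMap K R c)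
    {n : ℕ} {ι : Type*} (v : ι → R) (hv : ∀ i, v i ∈ 𝒜 n) {x : R}
    (hx : x ∈ 𝒜 n) (hxs : x ∈ Submodule.span R (Set.range v)) :
    x ∈ Submodule.span K (Set.range v) := by
  classical
  obtain ⟨c, hc⟩ := Finsupp.mem_span_range_iff_exists_finsupp.mp hxs
  have hproj : x = (GradedRing.proj 𝒜 n) x := by
    rw [GradedRing.proj_apply, DirectSum.decompose_of_mem_same 𝒜 hx]
  rw [hproj, ← hc, map_finsuppSum]
  refine Submodule.finsuppSum_mem K _ c _ fun i _ => ?_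
  have h6 := DirectSum.coe_decompose_mul_add_of_right_mem 𝒜 (i := 0) (j := n) (hv i)
    (a := c i)
  rw [zero_add] at h6
  rw [smul_eq_mul, GradedRing.proj_apply, h6]
  obtain ⟨k, hk⟩ := h𝒜0 _ (SetLike.coe_mem (DirectSum.decompose 𝒜 (c i) 0))
  rw [hk, ← Algebra.smul_def]
  exact Submodule.smul_mem _ k (Submodule.subset_span ⟨i, rfl⟩)

end Aux



section Core
open Finsupp Submodule

theorem syz_core {K R : Type*} [Field K] [CommRing R] [Algebra K R]
    {ι : Type*} {t : ℕ} (v : ι → R) (w : Fin t → R)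
    (hw : LinearIndependent K w)
    (hv : ∀ α, v α ∈ Submodule.span K (Set.range w))
    (hw' : ∀ a, w a ∈ Submodule.span K (Set.range v)) :
    ∃ Φ : ↥(LinearMap.ker (Finsupp.linearCombination R v)) →ₗ[R]
        ↥(LinearMap.ker
          (∑ a : Fin t, (LinearMap.proj a : (Fin t → R) →ₗ[R] R).smulRight (w a))),
      Function.Surjective Φ ∧
      LinearMap.ker Φ = Submodule.comap (LinearMap.ker (Finsupp.linearCombination R v)).subtype
        (Submodule.span R {x : ι →₀ R | Finsupp.linearCombination R v x = 0 ∧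
          ∀ α, x α ∈ (algebraMap K R).range}) := by
  classical
  set g : (ι →₀ R) →ₗ[R] R := Finsupp.linearCombination R v with hg
  set pm : (Fin t → R) →ₗ[R] R :=
    ∑ a : Fin t, (LinearMap.proj a : (Fin t → R) →ₗ[R] R).smulRight (w a) with hpm
  have pm_apply : ∀ z : Fin t → R, pm z = ∑ a, z a * w a := by
    intro z
    simp [hpm, LinearMap.smulRight_apply, smul_eq_mul]
  set b : Module.Basis (Fin t) K (span K (Set.range w)) := Module.Basis.span hw with hb
  set C : ι → Fin t → K := fun α a => b.repr ⟨v α, hv α⟩ a with hC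
  have hvC : ∀ α, v α = ∑ a, algebraMap K R (C α a) * w a := by
    intro α
    have h1 := b.sum_repr ⟨v α, hv α⟩
    have h2 := congrArg (Subtype.val) h1
    simp only [AddSubmonoidClass.coe_finset_sum, SetLike.val_smul] at h2
    rw [← h2]
    refine Finset.sum_congr rfl fun a _ => ?_
    rw [hb, Module.Basis.span_apply, Algebra.smul_def]
  set CR : (ι →₀ R) →ₗ[R] (Fin t → R) :=
    Finsupp.linearCombination R (fun α => fun a => algebraMap K R (C α a)) with hCR
  have hfactor : ∀ x, pm (CR x) = g x := by
    intro x
    induction x using Finsupp.induction_linear with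
    | zero => simp
    | add p q hp hq => rw [map_add, map_add, map_add, hp, hq]
    | single α r =>
      rw [hCR, hg, Finsupp.linearCombination_single, Finsupp.linearCombination_single,
        map_smul, pm_apply, smul_eq_mul, Finset.mul_sum, hvC α, smul_eq_mul, Finset.mul_sum]
  have hu : ∀ a, ∃ u : ι →₀ K, (u.sum fun i c => c • v i) = w a := fun a =>
    Finsupp.mem_span_range_iff_exists_finsupp.mp (hw' a)
  set u : Fin t → (ι →₀ K) := fun a => (hu a).choose with huu
  have hus : ∀ a, ((u a).sum fun i c => c • v i) = w a := fun a => (hu a).choose_spec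
  have key : ∀ a c, ((u a).sum fun α k => k * C α c) = if a = c then 1 else 0 := by
    intro a c
    have hyV : w a ∈ span K (Set.range w) := subset_span (Set.mem_range_self a)
    have hyeq : (⟨w a, hyV⟩ : span K (Set.range w)) =
        ((u a).sum fun α k => k • (⟨v α, hv α⟩ : span K (Set.range w))) := by
      apply Subtype.ext
      simp only [Finsupp.sum, AddSubmonoidClass.coe_finset_sum, SetLike.val_smul]
      exact (hus a).symm
    have hba : (⟨w a, hyV⟩ : span K (Set.range w)) = b a := by
      apply Subtype.ext
      rw [hb, Module.Basis.span_apply]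
    have h1 : b.repr ⟨w a, hyV⟩ c = if a = c then 1 else 0 := by
      rw [hba, Module.Basis.repr_self, Finsupp.single_apply]
    rw [← h1, hyeq, map_finsuppSum, Finsupp.sum_apply]
    refine Finsupp.sum_congr fun α _ => ?_
    rw [map_smul, Finsupp.smul_apply, smul_eq_mul, hC]
  set ud : Fin t → (ι →₀ R) := fun a => (u a).mapRange (algebraMap K R) (map_zero _) with hud
  have hCRud : ∀ a c, CR (ud a) c = algebraMap K R (if a = c then 1 else 0) := by
    intro a c
    rw [hCR, Finsupp.linearCombination_apply, hud, Finsupp.sum_mapRange_index (by simp)]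
    have h2 : ((u a).sum fun α k => (algebraMap K R k) • fun c => algebraMap K R (C α c)) c
        = (u a).sum fun α k => algebraMap K R (k * C α c) := by
      rw [Finsupp.sum_apply']
      refine Finsupp.sum_congr fun α _ => ?_
      rw [Pi.smul_apply, smul_eq_mul, ← map_mul]
    rw [h2, ← map_finsuppSum, key]
  set σl : (Fin t → R) →ₗ[R] (ι →₀ R) :=
    ∑ a : Fin t, (LinearMap.proj a : (Fin t → R) →ₗ[R] R).smulRight (ud a) with hσl
  have hσapp : ∀ z, σl z = ∑ a, z a • ud a := by
    intro z
    simp [hσl, LinearMap.smulRight_apply]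
  have hsec : ∀ z, CR (σl z) = z := by
    intro z
    funext c
    rw [hσapp, map_sum, Finset.sum_apply]
    have h1 : ∀ a ∈ Finset.univ, (CR (z a • ud a)) c = if a = c then z a else 0 := by
      intro a _
      rw [map_smul, Pi.smul_apply, hCRud a c, smul_eq_mul]
      split <;> simp
    rw [Finset.sum_congr rfl h1]
    simp
  have hgσ : ∀ z, g (σl z) = pm z := fun z => by rw [← hfactor, hsec]
  have hmem : ∀ x ∈ LinearMap.ker g, CR x ∈ LinearMap.ker pm := by
    intro x hx
    rw [LinearMap.mem_ker] at hx ⊢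
    rw [hfactor, hx]
  set Φ : ↥(LinearMap.ker g) →ₗ[R] ↥(LinearMap.ker pm) := CR.restrict hmem with hΦ
  have hΦval : ∀ x : ↥(LinearMap.ker g), (Φ x : Fin t → R) = CR x.1 := fun x => rfl
  refine ⟨Φ, ?_, ?_⟩
  · rintro ⟨z, hz⟩
    have h1 : σl z ∈ LinearMap.ker g := by
      rw [LinearMap.mem_ker, hgσ]
      exact hz
    exact ⟨⟨σl z, h1⟩, Subtype.ext (hsec z)⟩
  · set S : Set (ι →₀ R) := {x : ι →₀ R | g x = 0 ∧ ∀ α, x α ∈ (algebraMap K R).range}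
      with hS
    have hSker : ∀ y ∈ S, CR y = 0 := by
      intro y hy
      have hrange : ∀ c, CR y c ∈ (algebraMap K R).range := by
        intro c
        rw [hCR, Finsupp.linearCombination_apply, Finsupp.sum_apply', Finsupp.sum]
        refine sum_mem fun α _ => ?_
        rw [Pi.smul_apply, smul_eq_mul]
        exact mul_mem (hy.2 α) ⟨C α c, rfl⟩
      choose k hk using hrange
      have h0 : ∑ c, k c • w c = 0 := by
        have h2 := hfactor y
        rw [hy.1, pm_apply] at h2
        calc ∑ c, k c • w c = ∑ c, CR y c * w c := by
              refine Finset.sum_congr rfl fun c _ => ?_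
              rw [← hk c, Algebra.smul_def]
        _ = 0 := h2
      have hk0 : ∀ c, k c = 0 := Fintype.linearIndependent_iff.mp hw k h0
      funext c
      rw [Pi.zero_apply, ← hk c, hk0 c, map_zero]
    ext x
    simp only [LinearMap.mem_ker, Submodule.mem_comap, Submodule.coe_subtype]
    constructor
    · intro hx0
      have hx0' : CR x.1 = 0 := by
        rw [← hΦval x, hx0]; rfl
      set L : (ι →₀ R) →ₗ[R] (ι →₀ R) := LinearMap.id - σl ∘ₗ CR with hL
      have hLx : L x.1 = x.1 := by
        rw [hL]
        simp only [LinearMap.sub_apply, LinearMap.id_apply, LinearMap.coe_comp,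
          Function.comp_apply, hx0', map_zero, sub_zero]
      have hLS : ∀ α : ι, L (Finsupp.single α 1) ∈ S := by
        intro α
        constructor
        · show g _ = 0
          rw [hL]
          simp only [LinearMap.sub_apply, LinearMap.id_apply, LinearMap.coe_comp,
            Function.comp_apply, map_sub]
          rw [hgσ, hfactor, sub_self]
        · intro β
          rw [hL]
          simp only [LinearMap.sub_apply, LinearMap.id_apply, LinearMap.coe_comp,
            Function.comp_apply, Finsupp.sub_apply]
          refine sub_mem ?_ ?_
          · rw [Finsupp.single_apply]
            split
            · exact ⟨1, map_one _⟩
            · exact ⟨0, map_zero _⟩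
          · have hCRs : CR (Finsupp.single α 1) = fun c => algebraMap K R (C α c) := by
              rw [hCR, Finsupp.linearCombination_single, one_smul]
            rw [hCRs, hσapp, Finsupp.finset_sum_apply]
            refine sum_mem fun a _ => ?_
            rw [Finsupp.smul_apply, smul_eq_mul]
            refine mul_mem ⟨C α a, rfl⟩ ⟨u a β, ?_⟩
            rw [hud]
            simp [Finsupp.mapRange_apply]
      have hspan : ∀ p : ι →₀ R, L p ∈ span R S := by
        intro p
        have hp : p ∈ (⊤ : Submodule R (ι →₀ R)) := trivial
        rw [← Finsupp.supported_univ, Finsupp.supported_eq_span_single] at hp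
        have h3 : L p ∈ Submodule.map L
            (span R ((fun i => Finsupp.single i (1:R)) '' Set.univ)) :=
          Submodule.mem_map_of_mem hp
        rw [Submodule.map_span] at h3
        refine span_le.mpr ?_ h3
        rintro _ ⟨_, ⟨α, -, rfl⟩, rfl⟩
        exact subset_span (hLS α)
      rw [← hLx]
      exact hspan x.1
    · intro hx
      have h4 : span R S ≤ LinearMap.ker CR := span_le.mpr fun y hy => hSker y hy
      have h5 : CR x.1 = 0 := h4 hx
      apply Subtype.ext
      rw [hΦval, h5]
      rfl

end Core



/-- The Rees map `φ : R[T_1,…,T_s] → R[T]`, `T_i ↦ f_i T`. -/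
noncomputable def reesMap {R : Type*} [CommRing R] {s : ℕ} (f : Fin s → R) :
    MvPolynomial (Fin s) R →ₐ[R] Polynomial R :=
  MvPolynomial.aeval fun i => Polynomial.C (f i) * Polynomial.X

/-- `L_{(m,−)}`: the `R`-submodule of relations of the Rees algebra that are
`T`-homogeneous of `T`-degree `m`. -/
noncomputable def relationsTDegree {R : Type*} [CommRing R] {s : ℕ} (f : Fin s → R)
    (m : ℕ) : Submodule R (MvPolynomial (Fin s) R) :=
  (Submodule.restrictScalars R (RingHom.ker (reesMap f).toRingHom)) ⊓
    MvPolynomial.homogeneousSubmodule (Fin s) R m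

/-- The `R`-submodule of `L_{(m,−)}` spanned by the relations of minimal bidegree
`(m, md)`, i.e. the `T`-homogeneous relations of `T`-degree `m` all of whose
coefficients lie in `𝒜 0`. -/
noncomputable def relationsMinRDegree {K R : Type*} [Field K] [CommRing R] [Algebra K R]
    (𝒜 : ℕ → Submodule K R) {s : ℕ} (f : Fin s → R) (m : ℕ) :
    Submodule R ↥(relationsTDegree f m) :=
  Submodule.comap (relationsTDegree f m).subtype
    (Submodule.span R {F | F ∈ RingHom.ker (reesMap f).toRingHom ∧
      F.IsHomogeneous m ∧ ∀ α, MvPolynomial.coeff α F ∈ 𝒜 0})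

/-- Let `R` be a graded `K`-algebra with `R₀ = K` and `I` a homogeneous
ideal minimally generated by `f_1,…,f_s`, all of degree `d`.  Let `L` be the kernel of
`R[T_1,…,T_s] → R[T]`, `T_i ↦ f_i T`.  Then for every `m ≥ 1`, the first syzygy module
`Ω₁(Iᵐ)` — the kernel of the map `Rᵗ → R` determined by any minimal homogeneous
generating set `h_1,…,h_t` of `Iᵐ` — is isomorphic as an `R`-module to the quotient of
`L_{(m,−)}` by (the span of) the relations of bidegree `(m, md)`. -/
theorem first_syzygy_iso_rees_relations
    {K R : Type*} [Field K] [CommRing R] [Algebra K R]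
    (𝒜 : ℕ → Submodule K R) [GradedAlgebra 𝒜]
    (h𝒜0 : ∀ r ∈ 𝒜 0, ∃ c : K, r = algebraMap K R c)
    (I : Ideal R) (d s m : ℕ) (hm : 1 ≤ m) (f : Fin s → R)
    (hfhom : ∀ a, f a ∈ 𝒜 d)
    (hfspan : Ideal.span (Set.range f) = I)
    (hfmin : ∀ a : Fin s, Ideal.span (f '' {b | b ≠ a}) ≠ I) :
    ∀ (t : ℕ) (h : Fin t → R), (∀ a, h a ∈ 𝒜 (m * d)) →
      Ideal.span (Set.range h) = I ^ m →
      (∀ a : Fin t, Ideal.span (h '' {b | b ≠ a}) ≠ I ^ m) →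
      Nonempty
        ((LinearMap.ker (∑ a : Fin t, (LinearMap.proj a : (Fin t → R) →ₗ[R] R).smulRight (h a)))
          ≃ₗ[R]
        (↥(relationsTDegree f m) ⧸ relationsMinRDegree 𝒜 f m)) := by
  intro t h hh hhspan hhmin
  classical
  set D : Set (Fin s →₀ ℕ) := {e | Finsupp.degree e = m} with hD
  set v : ↥D → R := fun α => (α : Fin s →₀ ℕ).prod fun i k => f i ^ k with hvdef
  have hfI : ∀ i, f i ∈ I := fun i => by
    rw [← hfspan]; exact Ideal.subset_span ⟨i, rfl⟩
  have hvI : ∀ α : ↥D, v α ∈ I ^ m := by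
    intro α
    have h1 := prod_pow_mem_pow hfI (α : Fin s →₀ ℕ).support (fun i => (α : Fin s →₀ ℕ) i)
    have h2 : (∑ i ∈ (α : Fin s →₀ ℕ).support, (α : Fin s →₀ ℕ) i) = m := α.2
    rw [h2] at h1
    exact h1
  have hv𝒜 : ∀ α : ↥D, v α ∈ 𝒜 (m * d) := by
    intro α
    have h1 := prod_pow_mem_graded 𝒜 hfhom (α : Fin s →₀ ℕ).support
      (fun i => (α : Fin s →₀ ℕ) i)
    have h2 : (∑ i ∈ (α : Fin s →₀ ℕ).support, (α : Fin s →₀ ℕ) i) = m := α.2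
    rw [h2] at h1
    exact h1
  have hspanv : Submodule.span R (Set.range v) = I ^ m := by
    apply le_antisymm
    · rw [Submodule.span_le]
      rintro _ ⟨α, rfl⟩
      exact hvI α
    · rw [← hfspan]
      refine le_trans (pow_le_span_prod f m) ?_
      rw [Ideal.span_le]
      rintro x ⟨e, he, rfl⟩
      exact Submodule.subset_span ⟨⟨e, he⟩, rfl⟩
  have hh_I : ∀ a, h a ∈ I ^ m := fun a => by
    rw [← hhspan]; exact Ideal.subset_span ⟨a, rfl⟩
  have hvK : ∀ α, v α ∈ Submodule.span K (Set.range h) := by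
    intro α
    refine mem_span_K_of_graded 𝒜 h𝒜0 h hh (hv𝒜 α) ?_
    rw [show Submodule.span R (Set.range h) = I ^ m from hhspan]
    exact hvI α
  have hhK : ∀ a, h a ∈ Submodule.span K (Set.range v) := by
    intro a
    refine mem_span_K_of_graded 𝒜 h𝒜0 v hv𝒜 (hh a) ?_
    rw [show Submodule.span R (Set.range v) = I ^ m from hspanv]
    exact hh_I a
  have hLI : LinearIndependent K h := by
    rw [linearIndependent_iff_notMem_span]
    intro a ha
    apply hhmin a
    have hset : h '' (Set.univ \ {a}) = h '' {b | b ≠ a} := by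
      congr 1
      ext b
      simp [Set.mem_diff]
    rw [hset] at ha
    apply le_antisymm
    · rw [← hhspan]
      exact Ideal.span_mono (Set.image_subset_range h _)
    · rw [← hhspan, Ideal.span_le]
      rintro _ ⟨b, rfl⟩
      by_cases hb : b = a
      · subst hb
        exact Submodule.span_le_restrictScalars K R (h '' {c | c ≠ b}) ha
      · exact Ideal.subset_span ⟨b, hb, rfl⟩
  obtain ⟨Φ, hΦsurj, hΦker⟩ := syz_core v h hLI hvK hhK
  -- the identification of `relationsTDegree f m` with the kernel of `linearCombination R v`
  set toL : MvPolynomial (Fin s) R →ₗ[R] (↥D →₀ R) :=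
    (Finsupp.lsubtypeDomain D).comp (AddMonoidAlgebra.coeffLinearEquiv R).toLinearMap with htoL
  set fromL : (↥D →₀ R) →ₗ[R] MvPolynomial (Fin s) R :=
    Finsupp.linearCombination R (fun α : ↥D => monomial (α : Fin s →₀ ℕ) (1:R)) with hfromL
  have hsupp : ∀ F : MvPolynomial (Fin s) R, F.IsHomogeneous m →
      ∀ e ∈ F.support, e ∈ D := by
    intro F hF e he
    have h1 := hF (MvPolynomial.mem_support_iff.mp he)
    show Finsupp.degree e = m
    rw [Finsupp.degree_eq_weight_one]
    exact h1
  have hsubdom : ∀ F : MvPolynomial (Fin s) R,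
      toL F = Finsupp.subtypeDomain (fun e => e ∈ D) (AddMonoidAlgebra.coeff F) := fun F => rfl
  have hreesC : ∀ F : MvPolynomial (Fin s) R, F.IsHomogeneous m →
      reesMap f F = Polynomial.C (MvPolynomial.eval f F) * Polynomial.X ^ m := by
    intro F hF
    show MvPolynomial.aeval (fun i => Polynomial.C (f i) * Polynomial.X) F = _
    rw [MvPolynomial.aeval_def, MvPolynomial.eval₂_eq, MvPolynomial.eval_eq, map_sum,
      Finset.sum_mul]
    refine Finset.sum_congr rfl fun e he => ?_
    have hdeg : (∑ i ∈ e.support, e i) = m := hsupp F hF e he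
    have hprod : (∏ i ∈ e.support, (Polynomial.C (f i) * Polynomial.X) ^ e i)
        = Polynomial.C (∏ i ∈ e.support, f i ^ e i)
          * Polynomial.X ^ (∑ i ∈ e.support, e i) := by
      rw [map_prod, ← Finset.prod_pow_eq_pow_sum, ← Finset.prod_mul_distrib]
      refine Finset.prod_congr rfl fun i _ => ?_
      rw [mul_pow, map_pow]
    rw [Polynomial.algebraMap_eq, hprod, hdeg, map_mul, mul_assoc]
  have hrel_iff : ∀ F : MvPolynomial (Fin s) R,
      F ∈ relationsTDegree f m ↔ F.IsHomogeneous m ∧ MvPolynomial.eval f F = 0 := by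
    intro F
    rw [relationsTDegree, Submodule.mem_inf]
    constructor
    · rintro ⟨h1, h2⟩
      rw [Submodule.restrictScalars_mem, RingHom.mem_ker] at h1
      rw [MvPolynomial.mem_homogeneousSubmodule] at h2
      refine ⟨h2, ?_⟩
      have h4 : Polynomial.C (MvPolynomial.eval f F) * Polynomial.X ^ m = 0 := by
        rw [← hreesC F h2]
        exact h1
      rw [Polynomial.C_mul_X_pow_eq_monomial] at h4
      exact (Polynomial.monomial_eq_zero_iff _ _).mp h4
    · rintro ⟨h2, h3⟩
      refine ⟨?_, (MvPolynomial.mem_homogeneousSubmodule _ _).mpr h2⟩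
      rw [Submodule.restrictScalars_mem, RingHom.mem_ker]
      show reesMap f F = 0
      rw [hreesC F h2, h3, map_zero, zero_mul]
  have htoLg : ∀ F : MvPolynomial (Fin s) R, F.IsHomogeneous m →
      Finsupp.linearCombination R v (toL F) = MvPolynomial.eval f F := by
    intro F hF
    rw [Finsupp.linearCombination_apply, hsubdom]
    have h1 : ((Finsupp.subtypeDomain (fun e => e ∈ D) (AddMonoidAlgebra.coeff F)).sum
        fun α r => r • ((α : Fin s →₀ ℕ).prod fun i k => f i ^ k))
        = (AddMonoidAlgebra.coeff F).sum fun e r => r • (e.prod fun i k => f i ^ k) :=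
      Finsupp.sum_subtypeDomain_index
        (h := fun e r => r • (e.prod fun i k => f i ^ k)) (hsupp F hF)
    have h2 : (AddMonoidAlgebra.coeff F).sum (fun e r => r • (e.prod fun i k => f i ^ k))
        = MvPolynomial.eval f F := by
      rw [MvPolynomial.eval_eq]
      rfl
    exact h1.trans h2
  have hfromx : ∀ x : ↥D →₀ R, fromL x = x.sum fun α r => monomial (α : Fin s →₀ ℕ) r := by
    intro x
    rw [hfromL, Finsupp.linearCombination_apply]
    refine Finsupp.sum_congr fun α _ => ?_
    rw [MvPolynomial.smul_monomial, smul_eq_mul, mul_one]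
  have hfrom_eval : ∀ x : ↥D →₀ R,
      MvPolynomial.eval f (fromL x) = Finsupp.linearCombination R v x := by
    intro x
    rw [hfromx, map_finsuppSum, Finsupp.linearCombination_apply]
    refine Finsupp.sum_congr fun α _ => ?_
    rw [MvPolynomial.eval_monomial]
    rfl
  have hfrom_hom : ∀ x : ↥D →₀ R, (fromL x).IsHomogeneous m := by
    intro x
    rw [← MvPolynomial.mem_homogeneousSubmodule, hfromx]
    refine Submodule.finsuppSum_mem R _ x _ fun α _ => ?_
    rw [MvPolynomial.mem_homogeneousSubmodule]
    exact MvPolynomial.isHomogeneous_monomial _ α.2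
  have hleft : ∀ F : MvPolynomial (Fin s) R, F.IsHomogeneous m → fromL (toL F) = F := by
    intro F hF
    rw [hfromx, hsubdom]
    have h1 : ((Finsupp.subtypeDomain (fun e => e ∈ D) (AddMonoidAlgebra.coeff F)).sum
        fun α r => monomial (α : Fin s →₀ ℕ) r)
        = (AddMonoidAlgebra.coeff F).sum fun e r => monomial e r :=
      Finsupp.sum_subtypeDomain_index (h := fun e r => monomial e r) (hsupp F hF)
    rw [h1]
    exact MvPolynomial.support_sum_monomial_coeff F
  have hcoeff_from : ∀ (x : ↥D →₀ R) (β : Fin s →₀ ℕ),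
      MvPolynomial.coeff β (fromL x)
        = x.sum fun α r => if (α : Fin s →₀ ℕ) = β then r else 0 := by
    intro x β
    rw [hfromx]
    have h1 := map_finsuppSum (MvPolynomial.lcoeff R β) x
      (fun α r => monomial (α : Fin s →₀ ℕ) r)
    simp only [MvPolynomial.lcoeff_apply] at h1
    rw [h1]
    refine Finsupp.sum_congr fun α _ => ?_
    rw [MvPolynomial.coeff_monomial]
  have hright : ∀ x : ↥D →₀ R, toL (fromL x) = x := by
    intro x
    ext α
    rw [hsubdom, Finsupp.subtypeDomain_apply]
    show MvPolynomial.coeff (α : Fin s →₀ ℕ) (fromL x) = x α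
    rw [hcoeff_from]
    simp only [Subtype.coe_inj]
    rw [Finsupp.sum_ite_eq']
    split
    · rfl
    · exact (Finsupp.notMem_support_iff.mp (by assumption)).symm
  have hto_mem : ∀ F ∈ relationsTDegree f m,
      toL F ∈ LinearMap.ker (Finsupp.linearCombination R v) := by
    intro F hF
    rw [LinearMap.mem_ker]
    obtain ⟨h1, h2⟩ := (hrel_iff F).mp hF
    rw [htoLg F h1, h2]
  have hfrom_mem : ∀ x ∈ LinearMap.ker (Finsupp.linearCombination R v),
      fromL x ∈ relationsTDegree f m := by
    intro x hx
    rw [LinearMap.mem_ker] at hx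
    exact (hrel_iff _).mpr ⟨hfrom_hom x, by rw [hfrom_eval, hx]⟩
  set E : ↥(relationsTDegree f m) →ₗ[R] ↥(LinearMap.ker (Finsupp.linearCombination R v)) :=
    toL.restrict hto_mem with hE
  have hEsurj : Function.Surjective E := by
    intro y
    refine ⟨⟨fromL y.1, hfrom_mem y.1 y.2⟩, ?_⟩
    apply Subtype.ext
    show toL (fromL y.1) = y.1
    exact hright y.1
  set SMV : Set (MvPolynomial (Fin s) R) := {F | F ∈ RingHom.ker (reesMap f).toRingHom ∧
      F.IsHomogeneous m ∧ ∀ α, MvPolynomial.coeff α F ∈ 𝒜 0} with hSMV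
  set S : Set (↥D →₀ R) := {x : ↥D →₀ R | Finsupp.linearCombination R v x = 0 ∧
      ∀ α, x α ∈ (algebraMap K R).range} with hSdef
  have hS1 : ∀ F ∈ SMV, toL F ∈ S := by
    intro F hF
    obtain ⟨hk, hhom, hc⟩ := hF
    have hFrel : F ∈ relationsTDegree f m := by
      rw [relationsTDegree, Submodule.mem_inf]
      exact ⟨(Submodule.restrictScalars_mem _ _ _).mpr hk,
        (MvPolynomial.mem_homogeneousSubmodule _ _).mpr hhom⟩
    constructor
    · rw [htoLg F hhom]
      exact ((hrel_iff F).mp hFrel).2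
    · intro α
      obtain ⟨c, hcc⟩ := h𝒜0 _ (hc (α : Fin s →₀ ℕ))
      exact ⟨c, hcc.symm⟩
  have hS2 : ∀ x ∈ S, fromL x ∈ SMV := by
    intro x hx
    have hhom := hfrom_hom x
    refine ⟨?_, hhom, ?_⟩
    · rw [RingHom.mem_ker]
      show reesMap f (fromL x) = 0
      rw [hreesC _ hhom, hfrom_eval, hx.1, map_zero, zero_mul]
    · intro β
      rw [hcoeff_from]
      refine Submodule.finsuppSum_mem K _ x _ fun α _ => ?_
      split
      · obtain ⟨c, hc⟩ := hx.2 α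
        rw [← hc, Algebra.algebraMap_eq_smul_one]
        exact Submodule.smul_mem _ c (SetLike.one_mem_graded 𝒜)
      · exact Submodule.zero_mem _
  have hΨker : LinearMap.ker (Φ.comp E) = relationsMinRDegree 𝒜 f m := by
    ext F
    constructor
    · intro hF
      have h1 : Φ (E F) = 0 := hF
      have h1' : E F ∈ LinearMap.ker Φ := LinearMap.mem_ker.mpr h1
      rw [hΦker] at h1'
      have h2 : toL F.1 ∈ Submodule.span R S := Submodule.mem_comap.mp h1'
      have hhomF : F.1.IsHomogeneous m := ((hrel_iff F.1).mp F.2).1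
      have h3 : fromL (toL F.1) ∈ Submodule.map fromL (Submodule.span R S) :=
        Submodule.mem_map_of_mem h2
      rw [Submodule.map_span] at h3
      have h4 : Submodule.span R (fromL '' S) ≤ Submodule.span R SMV :=
        Submodule.span_mono (by rintro _ ⟨y, hy, rfl⟩; exact hS2 y hy)
      have h5 : F.1 ∈ Submodule.span R SMV := by
        rw [← hleft F.1 hhomF]
        exact h4 h3
      rw [relationsMinRDegree]
      exact Submodule.mem_comap.mpr h5
    · intro hF
      rw [relationsMinRDegree] at hF
      have h2 : F.1 ∈ Submodule.span R SMV := Submodule.mem_comap.mp hF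
      have h3 : toL F.1 ∈ Submodule.map toL (Submodule.span R SMV) :=
        Submodule.mem_map_of_mem h2
      rw [Submodule.map_span] at h3
      have h4 : Submodule.span R (toL '' SMV) ≤ Submodule.span R S :=
        Submodule.span_mono (by rintro _ ⟨y, hy, rfl⟩; exact hS1 y hy)
      have h5 : E F ∈ LinearMap.ker Φ := by
        rw [hΦker]
        exact Submodule.mem_comap.mpr (h4 h3)
      exact h5
  exact ⟨((Submodule.quotEquivOfEq _ _ hΨker.symm).trans
    ((Φ.comp E).quotKerEquivOfSurjective (hΦsurj.comp hEsurj))).symm⟩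
end

section
/- Let G be a closed K_4-free graph with e edges. Then the m-th power J_G^m of the binomial edge ideal is minimally generated by C(e+m−1, m) elements; equivalently, β_{0, 2m}(J_G^m) = C(e+m−1, m). -/
open MvPolynomial

/-- The graded free module `⨁_j R(−j)^{β j}`. -/
abbrev GradedFreeMod (R : Type*) [CommRing R] (β : ℕ → ℕ) : Type _ :=
  (Σ j : ℕ, Fin (β j)) →₀ R

/-- A minimal graded free resolution of an ideal `I` of a ring `R` graded by `𝒜`,
with graded Betti numbers `β i j`. -/
structure MinimalGradedFreeResolution {K R : Type*} [Field K] [CommRing R] [Algebra K R]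
    (𝒜 : ℕ → Submodule K R) (I : Ideal R) (β : ℕ → ℕ → ℕ) where
  d : ∀ i : ℕ, GradedFreeMod R (β (i + 1)) →ₗ[R] GradedFreeMod R (β i)
  ε : GradedFreeMod R (β 0) →ₗ[R] R
  range_ε : LinearMap.range ε = I
  homog_ε : ∀ (j : ℕ) (t : Fin (β 0 j)), ε (Finsupp.single ⟨j, t⟩ 1) ∈ 𝒜 j
  homog_d : ∀ (i j : ℕ) (t : Fin (β (i + 1) j)) (j' : ℕ) (t' : Fin (β i j')),
    d i (Finsupp.single ⟨j, t⟩ 1) ⟨j', t'⟩ ∈ 𝒜 (j - j')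
  minimal_d : ∀ (i j : ℕ) (t : Fin (β (i + 1) j)) (j' : ℕ) (t' : Fin (β i j')),
    j ≤ j' → d i (Finsupp.single ⟨j, t⟩ 1) ⟨j', t'⟩ = 0
  exact_zero : LinearMap.range (d 0) = LinearMap.ker ε
  exact_succ : ∀ i : ℕ, LinearMap.range (d (i + 1)) = LinearMap.ker (d i)

/-- The binomial edge ideal `J_G = (x_i y_j − x_j y_i : {i,j} ∈ E(G))` in the
polynomial ring `K[x_1,…,x_n,y_1,…,y_n]`, with `x i = X (Sum.inl i)` and
`y i = X (Sum.inr i)`. -/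
noncomputable def binomialEdgeIdeal (K : Type*) [Field K] (n : ℕ)
    (G : SimpleGraph (Fin n)) : Ideal (MvPolynomial (Fin n ⊕ Fin n) K) :=
  Ideal.span {p | ∃ i j : Fin n, G.Adj i j ∧
    p = X (Sum.inl i) * X (Sum.inr j) - X (Sum.inl j) * X (Sum.inr i)}


open MvPolynomial Finsupp

namespace BEI

variable {n : ℕ}

/-- injection of variables into ℕ respecting the intended order: x's first. -/
def rho (n : ℕ) : (Fin n ⊕ Fin n) → ℕ := Sum.elim Fin.val (fun j => n + j.val)

lemma rho_inj : Function.Injective (rho n) := by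
  rintro (a | a) (b | b) h <;> simp only [rho, Sum.elim_inl, Sum.elim_inr] at h
  · exact congrArg Sum.inl (Fin.ext h)
  · exact absurd h (by have := a.isLt; omega)
  · exact absurd h (by have := b.isLt; omega)
  · exact congrArg Sum.inr (Fin.ext (by omega))

/-- lexicographic key of a monomial exponent. -/
noncomputable def key (d : (Fin n ⊕ Fin n) →₀ ℕ) : Lex (ℕ →₀ ℕ) := toLex (Finsupp.mapDomain (rho n) d)

lemma key_add (a b : (Fin n ⊕ Fin n) →₀ ℕ) : key (a + b) = key a + key b := by
  simp [key, Finsupp.mapDomain_add]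

lemma key_inj : Function.Injective (key (n := n)) := by
  intro a b h
  exact Finsupp.mapDomain_injective rho_inj (toLex.injective h)

/-- leading exponent of the edge binomial for pair `p` (with `p.1 < p.2`). -/
noncomputable def expL (p : Fin n × Fin n) : (Fin n ⊕ Fin n) →₀ ℕ :=
  Finsupp.single (Sum.inl p.1) 1 + Finsupp.single (Sum.inr p.2) 1

/-- trailing exponent of the edge binomial. -/
noncomputable def expS (p : Fin n × Fin n) : (Fin n ⊕ Fin n) →₀ ℕ :=
  Finsupp.single (Sum.inl p.2) 1 + Finsupp.single (Sum.inr p.1) 1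

lemma key_expS_lt_key_expL {p : Fin n × Fin n} (hp : p.1 < p.2) :
    key (expS p) < key (expL p) := by
  have h1 : (p.1 : ℕ) < p.2 := hp
  have h2 : (p.1 : ℕ) < n := p.1.isLt
  rw [key, key, expS, expL, Finsupp.mapDomain_add, Finsupp.mapDomain_add,
    Finsupp.mapDomain_single, Finsupp.mapDomain_single, Finsupp.mapDomain_single,
    Finsupp.mapDomain_single]
  rw [Finsupp.Lex.lt_iff]
  refine ⟨(p.1 : ℕ), fun j hj => ?_, ?_⟩
  · simp only [ofLex_toLex, Finsupp.add_apply, Finsupp.single_apply, rho, Sum.elim_inl,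
      Sum.elim_inr]
    split_ifs <;> omega
  · simp only [ofLex_toLex, Finsupp.add_apply, Finsupp.single_apply, rho, Sum.elim_inl,
      Sum.elim_inr]
    split_ifs <;> omega

/-- the leading monomial of the product over a multiset of pairs. -/
noncomputable def expSum (M : Multiset (Fin n × Fin n)) : (Fin n ⊕ Fin n) →₀ ℕ := (M.map expL).sum

@[simp] lemma expSum_zero : expSum (0 : Multiset (Fin n × Fin n)) = 0 := rfl

@[simp] lemma expSum_cons (p : Fin n × Fin n) (M : Multiset (Fin n × Fin n)) :
    expSum (p ::ₘ M) = expL p + expSum M := by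
  simp [expSum]

lemma expSum_apply_inl (M : Multiset (Fin n × Fin n)) (a : Fin n) :
    expSum M (Sum.inl a) = (M.map Prod.fst).count a := by
  classical
  induction M using Multiset.induction with
  | empty => simp
  | cons p M ih =>
    simp only [expSum_cons, Finsupp.add_apply, ih, Multiset.map_cons, Multiset.count_cons,
      expL, Finsupp.single_apply]
    split_ifs with h1 h2 h2 <;> simp_all <;> omega

lemma expSum_apply_inr (M : Multiset (Fin n × Fin n)) (a : Fin n) :
    expSum M (Sum.inr a) = (M.map Prod.snd).count a := by
  classical
  induction M using Multiset.induction with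
  | empty => simp
  | cons p M ih =>
    simp only [expSum_cons, Finsupp.add_apply, ih, Multiset.map_cons, Multiset.count_cons,
      expL, Finsupp.single_apply]
    split_ifs with h1 h2 h2 <;> simp_all <;> omega

/-- validity of a pair: increasing with span at most 2. -/
def Valid (p : Fin n × Fin n) : Prop := p.1 < p.2 ∧ (p.2 : ℕ) ≤ (p.1 : ℕ) + 2

lemma exists_max_pair (M : Multiset (Fin n × Fin n)) (hM : ∀ p ∈ M, Valid p) (h0 : M ≠ 0) :
    ∃ p ∈ M, (∀ q ∈ M, q.1 ≤ p.1) ∧ (∀ q ∈ M, q.2 ≤ p.2) := by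
  classical
  obtain ⟨p, hpmem, hpmax⟩ := Finset.exists_max_image M.toFinset
    (fun q => toLex (q.2, q.1)) (by rwa [Multiset.toFinset_nonempty])
  rw [Multiset.mem_toFinset] at hpmem
  have hle : ∀ q ∈ M, toLex (q.2, q.1) ≤ toLex (p.2, p.1) := by
    intro q hq; exact hpmax _ (Multiset.mem_toFinset.mpr hq)
  refine ⟨p, hpmem, ?_, ?_⟩
  · intro q hq
    have h := hle q hq
    rw [Prod.Lex.le_iff] at h
    rcases h with h | ⟨h1, h2⟩
    · -- q.2 < p.2
      by_contra hq1
      push_neg at hq1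
      have hvq := hM q hq
      have hvp := hM p hpmem
      have c1 : (p.1 : ℕ) < q.1 := hq1
      have c2 : (q.1 : ℕ) < q.2 := hvq.1
      have c3 : (q.2 : ℕ) < p.2 := h
      have c4 : (p.2 : ℕ) ≤ (p.1 : ℕ) + 2 := hvp.2
      omega
    · exact h2
  · intro q hq
    have h := hle q hq
    rw [Prod.Lex.le_iff] at h
    rcases h with h | ⟨h1, h2⟩
    · exact le_of_lt h
    · exact le_of_eq h1

lemma expSum_injective : ∀ (N : ℕ) (M M' : Multiset (Fin n × Fin n)), M.card = N →
    (∀ p ∈ M, Valid p) → (∀ p ∈ M', Valid p) → expSum M = expSum M' → M = M' := by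
  classical
  intro N
  induction N using Nat.strong_induction_on with
  | _ N ih =>
    intro M M' hcard hM hM' h
    have hfst : M.map Prod.fst = M'.map Prod.fst := by
      ext a
      rw [← expSum_apply_inl, ← expSum_apply_inl, h]
    have hsnd : M.map Prod.snd = M'.map Prod.snd := by
      ext a
      rw [← expSum_apply_inr, ← expSum_apply_inr, h]
    rcases eq_or_ne M 0 with rfl | hM0
    · have : M'.map Prod.fst = 0 := by rw [← hfst]; simp
      rw [Multiset.map_eq_zero] at this
      rw [this]
    · have hM'0 : M' ≠ 0 := by
        intro hc
        apply hM0
        rw [hc] at hfst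
        simpa [Multiset.map_eq_zero] using hfst
      obtain ⟨p, hp, hp1, hp2⟩ := exists_max_pair M hM hM0
      obtain ⟨p', hp', hp'1, hp'2⟩ := exists_max_pair M' hM' hM'0
      have e1 : p.1 = p'.1 := by
        have h1 : p.1 ≤ p'.1 := by
          have : p.1 ∈ M'.map Prod.fst := by
            rw [← hfst]; exact Multiset.mem_map_of_mem _ hp
          obtain ⟨q, hq, hq1⟩ := Multiset.mem_map.mp this
          rw [← hq1]; exact hp'1 q hq
        have h2 : p'.1 ≤ p.1 := by
          have : p'.1 ∈ M.map Prod.fst := by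
            rw [hfst]; exact Multiset.mem_map_of_mem _ hp'
          obtain ⟨q, hq, hq1⟩ := Multiset.mem_map.mp this
          rw [← hq1]; exact hp1 q hq
        exact le_antisymm h1 h2
      have e2 : p.2 = p'.2 := by
        have h1 : p.2 ≤ p'.2 := by
          have : p.2 ∈ M'.map Prod.snd := by
            rw [← hsnd]; exact Multiset.mem_map_of_mem _ hp
          obtain ⟨q, hq, hq1⟩ := Multiset.mem_map.mp this
          rw [← hq1]; exact hp'2 q hq
        have h2 : p'.2 ≤ p.2 := by
          have : p'.2 ∈ M.map Prod.snd := by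
            rw [hsnd]; exact Multiset.mem_map_of_mem _ hp'
          obtain ⟨q, hq, hq1⟩ := Multiset.mem_map.mp this
          rw [← hq1]; exact hp2 q hq
        exact le_antisymm h1 h2
      have epp : p = p' := Prod.ext e1 e2
      subst epp
      have hMc : M = p ::ₘ M.erase p := (Multiset.cons_erase hp).symm
      have hM'c : M' = p ::ₘ M'.erase p := (Multiset.cons_erase hp').symm
      have hsum : expSum (M.erase p) = expSum (M'.erase p) := by
        have : expL p + expSum (M.erase p) = expL p + expSum (M'.erase p) := by
          rw [← expSum_cons, ← expSum_cons, ← hMc, ← hM'c, h]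
        exact add_left_cancel this
      have hcard' : (M.erase p).card < N := by
        have h1 : M.card ≠ 0 := by simpa [Multiset.card_eq_zero] using hM0
        rw [Multiset.card_erase_of_mem hp]
        rw [← hcard]
        exact Nat.pred_lt h1
      have := ih _ hcard' (M.erase p) (M'.erase p) rfl
        (fun q hq => hM q (Multiset.mem_of_mem_erase hq))
        (fun q hq => hM' q (Multiset.mem_of_mem_erase hq)) hsum
      rw [hMc, hM'c, this]

end BEI

open MvPolynomial Finsupp

namespace BEI2
-- general homogeneous component lemmas
variable {K : Type*} [Field K] {σ : Type*}

lemma comp_mul_lt {k j : ℕ} (hj : j < k) (r s : MvPolynomial σ K)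
    (hs : s.IsHomogeneous k) : homogeneousComponent j (r * s) = 0 := by
  classical
  have hr := sum_homogeneousComponent r
  have hrs : r * s = ∑ i ∈ Finset.range (r.totalDegree + 1), (homogeneousComponent i r) * s := by
    rw [← Finset.sum_mul, hr]
  rw [hrs, map_sum]
  refine Finset.sum_eq_zero fun i _ => ?_
  have hmem : (homogeneousComponent i r * s) ∈ homogeneousSubmodule σ K (i + k) :=
    (mem_homogeneousSubmodule _ _).mpr ((homogeneousComponent_isHomogeneous i r).mul hs)
  rw [homogeneousComponent_of_mem hmem, if_neg (by omega)]

lemma comp_mul_eq {k : ℕ} (r s : MvPolynomial σ K) (hs : s.IsHomogeneous k) :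
    homogeneousComponent k (r * s) = C (coeff 0 r) * s := by
  classical
  have hr := sum_homogeneousComponent r
  have hrs : r * s = ∑ i ∈ Finset.range (r.totalDegree + 1), (homogeneousComponent i r) * s := by
    rw [← Finset.sum_mul, hr]
  rw [hrs, map_sum]
  rw [Finset.sum_eq_single_of_mem 0 (by simp)]
  · have hmem : (homogeneousComponent 0 r * s) ∈ homogeneousSubmodule σ K (0 + k) :=
      (mem_homogeneousSubmodule _ _).mpr ((homogeneousComponent_isHomogeneous 0 r).mul hs)
    rw [homogeneousComponent_of_mem hmem, if_pos (by omega), homogeneousComponent_zero]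
  · intro i _ hi
    have hmem : (homogeneousComponent i r * s) ∈ homogeneousSubmodule σ K (i + k) :=
      (mem_homogeneousSubmodule _ _).mpr ((homogeneousComponent_isHomogeneous i r).mul hs)
    rw [homogeneousComponent_of_mem hmem, if_neg (by omega)]

lemma span_homog_comp_zero {S : Set (MvPolynomial σ K)} {dd : ℕ}
    (hS : ∀ s ∈ S, MvPolynomial.IsHomogeneous s dd) {p : MvPolynomial σ K}
    (hp : p ∈ Ideal.span S) {j : ℕ} (hj : j < dd) :
    homogeneousComponent j p = 0 := by
  classical
  obtain ⟨c, hc, rfl⟩ := Submodule.mem_span_set.mp hp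
  rw [Finsupp.sum, map_sum]
  refine Finset.sum_eq_zero fun a ha => ?_
  rw [smul_eq_mul]
  exact comp_mul_lt hj _ _ (hS a (hc ha))

lemma span_homog_comp_mem {S : Set (MvPolynomial σ K)} {dd : ℕ}
    (hS : ∀ s ∈ S, MvPolynomial.IsHomogeneous s dd) {p : MvPolynomial σ K}
    (hp : p ∈ Ideal.span S) :
    homogeneousComponent dd p ∈ Submodule.span K S := by
  classical
  obtain ⟨c, hc, rfl⟩ := Submodule.mem_span_set.mp hp
  rw [Finsupp.sum, map_sum]
  refine Submodule.sum_mem _ fun a ha => ?_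
  rw [smul_eq_mul, comp_mul_eq _ _ (hS a (hc ha)), ← MvPolynomial.smul_eq_C_mul]
  exact Submodule.smul_mem _ _ (Submodule.subset_span (hc ha))

-- generic linear independence from distinct leading monomials
lemma linIndep_of_leading {ι Γ : Type*} [Fintype ι] [LinearOrder Γ]
    (key : (σ →₀ ℕ) → Γ) (hkey : Function.Injective key)
    (μ : ι → (σ →₀ ℕ)) (hμ : Function.Injective μ) (v : ι → MvPolynomial σ K)
    (hcoeff : ∀ i, coeff (μ i) (v i) = 1)
    (hsupp : ∀ i, ∀ ν ∈ (v i).support, key ν ≤ key (μ i)) :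
    LinearIndependent K v := by
  classical
  rw [Fintype.linearIndependent_iff]
  intro c hc
  by_contra hne
  push_neg at hne
  have hs : (Finset.univ.filter (fun i => c i ≠ 0)).Nonempty := by
    obtain ⟨i, hi⟩ := hne
    exact ⟨i, by simp [hi]⟩
  obtain ⟨i0, hi0mem, hi0max⟩ := Finset.exists_max_image _ (fun i => key (μ i)) hs
  have hc0 : c i0 ≠ 0 := (Finset.mem_filter.mp hi0mem).2
  have := congrArg (coeff (μ i0)) hc
  rw [MvPolynomial.coeff_sum, coeff_zero] at this
  rw [Finset.sum_eq_single_of_mem i0 (Finset.mem_univ _)] at this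
  · rw [MvPolynomial.coeff_smul, hcoeff i0, smul_eq_mul, mul_one] at this
    exact hc0 this
  · intro i _ hii0
    rw [MvPolynomial.coeff_smul]
    rcases eq_or_ne (c i) 0 with h | h
    · rw [h, zero_smul]
    · have hile : key (μ i) ≤ key (μ i0) := hi0max i (by simp [h])
      have : μ i0 ∉ (v i).support := by
        intro hmem
        have h1 : key (μ i0) ≤ key (μ i) := hsupp i _ hmem
        exact hii0 (hμ (hkey (le_antisymm hile h1)))
      rw [MvPolynomial.notMem_support_iff.mp this, smul_zero]

end BEI2

open MvPolynomial Finsupp BEI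

namespace BEI

variable {n : ℕ} (K : Type*) [Field K]

noncomputable def fpair (p : Fin n × Fin n) : MvPolynomial (Fin n ⊕ Fin n) K :=
  X (Sum.inl p.1) * X (Sum.inr p.2) - X (Sum.inl p.2) * X (Sum.inr p.1)

lemma X_mul_X (a b : Fin n ⊕ Fin n) :
    (X a * X b : MvPolynomial (Fin n ⊕ Fin n) K) =
      monomial (Finsupp.single a 1 + Finsupp.single b 1) 1 := by
  rw [X, X, monomial_mul, one_mul]

lemma fpair_eq (p : Fin n × Fin n) :
    fpair K p = monomial (expL p) 1 - monomial (expS p) 1 := by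
  rw [fpair, X_mul_X, X_mul_X, expL, expS]

lemma fpair_isHomogeneous (p : Fin n × Fin n) : (fpair K p).IsHomogeneous 2 :=
  ((isHomogeneous_X _ _).mul (isHomogeneous_X _ _)).sub
    ((isHomogeneous_X _ _).mul (isHomogeneous_X _ _))

lemma prod_homog (M : Multiset (Fin n × Fin n)) :
    ((M.map (fpair K)).prod).IsHomogeneous (2 * M.card) := by
  induction M using Multiset.induction with
  | empty => simpa using (isHomogeneous_one (Fin n ⊕ Fin n) K)
  | cons p M ih =>
    rw [Multiset.card_cons, Multiset.map_cons, Multiset.prod_cons,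
      show 2 * (M.card + 1) = 2 + 2 * M.card by ring]
    exact (fpair_isHomogeneous K p).mul ih

lemma prod_struct (M : Multiset (Fin n × Fin n)) (hM : ∀ p ∈ M, p.1 < p.2) :
    ∃ q : MvPolynomial (Fin n ⊕ Fin n) K,
      (M.map (fpair K)).prod = monomial (expSum M) 1 + q ∧
        ∀ ν ∈ q.support, key ν < key (expSum M) := by
  classical
  induction M using Multiset.induction with
  | empty => exact ⟨0, by simp, by simp⟩
  | cons p M ih =>
    obtain ⟨q, hq, hqb⟩ := ih (fun r hr => hM r (Multiset.mem_cons_of_mem hr))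
    have hp := hM p (Multiset.mem_cons_self p M)
    refine ⟨monomial (expL p) 1 * q - monomial (expS p) 1 * (M.map (fpair K)).prod, ?_, ?_⟩
    · rw [Multiset.map_cons, Multiset.prod_cons, fpair_eq, expSum_cons, hq,
        show (monomial (expL p + expSum M) 1 : MvPolynomial (Fin n ⊕ Fin n) K)
          = monomial (expL p) 1 * monomial (expSum M) 1 by rw [monomial_mul, one_mul]]
      ring
    · intro ν hν
      rw [expSum_cons, key_add]
      have hsub := MvPolynomial.support_sub (σ := Fin n ⊕ Fin n) _ _ hν
      rcases Finset.mem_union.mp hsub with h | h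
      · have h2 := MvPolynomial.support_mul _ _ h
        rw [Finset.mem_add] at h2
        obtain ⟨α, hα, β, hβ, rfl⟩ := h2
        have hα' : α = expL p := by
          have := MvPolynomial.support_monomial_subset hα
          simpa using this
        subst hα'
        rw [key_add]
        exact add_lt_add_right (hqb β hβ) _
      · have h2 := MvPolynomial.support_mul _ _ h
        rw [Finset.mem_add] at h2
        obtain ⟨α, hα, β, hβ, rfl⟩ := h2
        have hα' : α = expS p := by
          have := MvPolynomial.support_monomial_subset hα
          simpa using this
        subst hα'
        have hβ' : key β ≤ key (expSum M) := by
          rw [hq] at hβ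
          rcases Finset.mem_union.mp (Finsupp.support_add hβ) with h3 | h3
          · have := MvPolynomial.support_monomial_subset h3
            simp only [Finset.mem_singleton] at this
            rw [this]
          · exact le_of_lt (hqb β h3)
        rw [key_add]
        exact add_lt_add_of_lt_of_le (key_expS_lt_key_expL hp) hβ'

lemma coeff_prod_leading (M : Multiset (Fin n × Fin n)) (hM : ∀ p ∈ M, p.1 < p.2) :
    coeff (expSum M) ((M.map (fpair K)).prod) = 1 := by
  obtain ⟨q, hq, hqb⟩ := prod_struct K M hM
  rw [hq, coeff_add, coeff_monomial, if_pos rfl]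
  have : expSum M ∉ q.support := fun h => lt_irrefl _ (hqb _ h)
  rw [MvPolynomial.notMem_support_iff.mp this, add_zero]

lemma support_prod_le (M : Multiset (Fin n × Fin n)) (hM : ∀ p ∈ M, p.1 < p.2) :
    ∀ ν ∈ ((M.map (fpair K)).prod).support, key ν ≤ key (expSum M) := by
  obtain ⟨q, hq, hqb⟩ := prod_struct K M hM
  intro ν hν
  rw [hq] at hν
  rcases Finset.mem_union.mp (Finsupp.support_add hν) with h | h
  · have := MvPolynomial.support_monomial_subset h
    simp only [Finset.mem_singleton] at this
    rw [this]
  · exact le_of_lt (hqb ν h)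

end BEI

open scoped Pointwise

namespace BEI

variable {n : ℕ} (K : Type*) [Field K]

lemma edge_span_le (G : SimpleGraph (Fin n))
    (hclosed : ∀ i j k : Fin n, i < j → j < k → G.Adj i k → G.Adj i j ∧ G.Adj j k)
    (hK4free : ∀ s : Finset (Fin n), ¬ G.IsNClique 4 s)
    {i j : Fin n} (hij : i < j) (ha : G.Adj i j) : (j : ℕ) ≤ (i : ℕ) + 2 := by
  by_contra hcon
  push_neg at hcon
  have hij' : (i : ℕ) < (j : ℕ) := hij
  have hjn : (j : ℕ) < n := j.isLt
  set b : Fin n := ⟨(i : ℕ) + 1, by omega⟩ with hb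
  set c : Fin n := ⟨(i : ℕ) + 2, by omega⟩ with hc
  have hib : i < b := by simp [hb, Fin.lt_def]
  have hbj : b < j := by simp only [hb, Fin.lt_def]; omega
  have hic : i < c := by simp [hc, Fin.lt_def]
  have hcj : c < j := by simp only [hc, Fin.lt_def]; omega
  have hbc : b < c := by simp [hb, hc, Fin.lt_def]
  obtain ⟨aib, abj⟩ := hclosed i b j hib hbj ha
  obtain ⟨aic, acj⟩ := hclosed i c j hic hcj ha
  obtain ⟨abc, -⟩ := hclosed b c j hbc hcj abj
  apply hK4free {i, b, c, j}
  constructor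
  · intro x hx y hy hxy
    simp only [Finset.coe_insert, Set.mem_insert_iff, Finset.coe_singleton,
      Set.mem_singleton_iff] at hx hy
    rcases hx with rfl | rfl | rfl | rfl <;> rcases hy with rfl | rfl | rfl | rfl <;>
      first
        | exact absurd rfl hxy
        | assumption
        | exact aib.symm
        | exact aic.symm
        | exact ha.symm
        | exact abc.symm
        | exact abj.symm
        | exact acj.symm
  · rw [Finset.card_insert_of_notMem (by simp [hb, hc, Fin.ext_iff]; omega),
      Finset.card_insert_of_notMem (by simp [hb, hc, Fin.ext_iff]; omega),
      Finset.card_insert_of_notMem (by simp [hb, hc, Fin.ext_iff]; omega),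
      Finset.card_singleton]

/-- The type of (oriented) edges of `G`. -/
abbrev EdgeT (G : SimpleGraph (Fin n)) : Type _ := {p : Fin n × Fin n // p.1 < p.2 ∧ G.Adj p.1 p.2}

lemma edge_card (G : SimpleGraph (Fin n)) : G.edgeSet.ncard = Nat.card (EdgeT G) := by
  rw [← Nat.card_coe_set_eq]
  refine (Nat.card_congr ((Equiv.ofBijective
    (fun e : EdgeT G => (⟨s(e.1.1, e.1.2), e.2.2⟩ : G.edgeSet)) ⟨?_, ?_⟩))).symm
  · intro e1 e2 h
    have h2 : s(e1.1.1, e1.1.2) = s(e2.1.1, e2.1.2) := congrArg Subtype.val h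
    rw [Sym2.eq_iff] at h2
    apply Subtype.ext
    rcases h2 with ⟨ha, hb⟩ | ⟨ha, hb⟩
    · exact Prod.ext ha hb
    · exfalso
      have l1 := e1.2.1
      have l2 := e2.2.1
      rw [ha, hb] at l1
      exact absurd l2 (asymm l1)
  · rintro ⟨z, hz⟩
    induction z with
    | _ a b =>
      rw [SimpleGraph.mem_edgeSet] at hz
      rcases lt_trichotomy a b with h | h | h
      · exact ⟨⟨(a, b), h, hz⟩, rfl⟩
      · exact absurd h hz.ne
      · exact ⟨⟨(b, a), h, hz.symm⟩, Subtype.ext (Sym2.eq_swap)⟩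

lemma mem_range_pow {α β : Type*} [CommMonoid β] (f : α → β) :
    ∀ (m : ℕ) (x : β), (x ∈ (Set.range f) ^ m ↔
      ∃ M : Multiset α, M.card = m ∧ (M.map f).prod = x) := by
  classical
  intro m
  induction m with
  | zero =>
    intro x
    simp only [pow_zero, Set.mem_one]
    constructor
    · rintro rfl; exact ⟨0, by simp⟩
    · rintro ⟨M, hM, rfl⟩
      rw [Multiset.card_eq_zero] at hM
      simp [hM]
  | succ m ih =>
    intro x
    rw [pow_succ']
    constructor
    · intro hx
      obtain ⟨s, hs, y, hy, rfl⟩ := Set.mem_mul.mp hx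
      obtain ⟨e, rfl⟩ := hs
      obtain ⟨M, hM, rfl⟩ := (ih y).mp hy
      exact ⟨e ::ₘ M, by simp [hM], by simp⟩
    · rintro ⟨M, hM, rfl⟩
      have hM0 : M ≠ 0 := by
        intro h; rw [h] at hM; simp at hM
      obtain ⟨a, haM⟩ := Multiset.exists_mem_of_ne_zero hM0
      have hMc : M = a ::ₘ M.erase a := (Multiset.cons_erase haM).symm
      rw [hMc, Multiset.map_cons, Multiset.prod_cons]
      refine Set.mul_mem_mul (Set.mem_range_self a) ((ih _).mpr ⟨M.erase a, ?_, rfl⟩)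
      rw [Multiset.card_erase_of_mem haM, hM]
      rfl

end BEI

namespace BEI

variable {n : ℕ} (K : Type*) [Field K]

lemma bei_span (G : SimpleGraph (Fin n)) : binomialEdgeIdeal K n G =
    Ideal.span (Set.range (fun e : EdgeT G => fpair K e.1)) := by
  apply le_antisymm
  · rw [binomialEdgeIdeal, Ideal.span_le]
    rintro p ⟨i, j, hadj, rfl⟩
    rcases lt_trichotomy i j with h | h | h
    · exact Ideal.subset_span ⟨⟨(i, j), h, hadj⟩, rfl⟩
    · exact absurd h hadj.ne
    · have heq : (X (Sum.inl i) * X (Sum.inr j) - X (Sum.inl j) * X (Sum.inr i) :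
          MvPolynomial (Fin n ⊕ Fin n) K) = -(fpair K (j, i)) := by
        rw [fpair]; ring
      rw [heq]
      exact neg_mem (Ideal.subset_span ⟨⟨(j, i), h, hadj.symm⟩, rfl⟩)
  · rw [Ideal.span_le]
    rintro p ⟨e, rfl⟩
    exact Ideal.subset_span ⟨e.1.1, e.1.2, e.2.2, rfl⟩

end BEI


open BEI Finsupp

/-- Let `G` be a closed `K₄`-free graph with `e` edges.  Then the
`m`-th power `J_G^m` of the binomial edge ideal is minimally generated by `C(e+m−1, m)`
elements: `β_{0, 2m}(J_G^m) = C(e+m−1, m)`. -/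
theorem number_of_minimal_generators_of_power_of_binomial_edge_ideal
    {K : Type*} [Field K] (n : ℕ) (G : SimpleGraph (Fin n))
    (hclosed : ∀ i j k : Fin n, i < j → j < k → G.Adj i k → G.Adj i j ∧ G.Adj j k)
    (hK4free : ∀ s : Finset (Fin n), ¬ G.IsNClique 4 s) :
    ∀ (m : ℕ), 1 ≤ m → ∀ (β : ℕ → ℕ → ℕ)
      (_ : MinimalGradedFreeResolution
        (fun j => MvPolynomial.homogeneousSubmodule (Fin n ⊕ Fin n) K j)
        ((binomialEdgeIdeal K n G) ^ m) β),
      β 0 (2 * m) = Nat.choose (G.edgeSet.ncard + m - 1) m := by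
  classical
  intro m _hm β F
  set d := 2 * m with hd
  letI : Fintype (EdgeT G) := Fintype.ofFinite _
  set f : EdgeT G → MvPolynomial (Fin n ⊕ Fin n) K := fun e => fpair K e.1 with hf
  have hvalid : ∀ e : EdgeT G, Valid e.1 :=
    fun e => ⟨e.2.1, edge_span_le G hclosed hK4free e.2.1 e.2.2⟩
  set P : Sym (EdgeT G) m → MvPolynomial (Fin n ⊕ Fin n) K :=
    fun M => ((M.1.map f).prod) with hP
  have hmapmap : ∀ M : Sym (EdgeT G) m, M.1.map f = (M.1.map Subtype.val).map (fpair K) := by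
    intro M; rw [Multiset.map_map]; rfl
  have hltM : ∀ M : Sym (EdgeT G) m, ∀ p ∈ M.1.map Subtype.val, p.1 < p.2 := by
    rintro M p hp
    obtain ⟨e, _, rfl⟩ := Multiset.mem_map.mp hp
    exact e.2.1
  have hvalidM : ∀ M : Sym (EdgeT G) m, ∀ p ∈ M.1.map Subtype.val, Valid p := by
    rintro M p hp
    obtain ⟨e, _, rfl⟩ := Multiset.mem_map.mp hp
    exact hvalid e
  -- the leading monomial map
  set μ : Sym (EdgeT G) m → ((Fin n ⊕ Fin n) →₀ ℕ) := fun M => expSum (M.1.map Subtype.val)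
    with hμ
  have hμinj : Function.Injective μ := by
    intro M M' h
    have := expSum_injective m _ _ (by rw [Multiset.card_map]; exact M.2)
      (hvalidM M) (hvalidM M') h
    exact Subtype.ext (Multiset.map_injective Subtype.val_injective this)
  -- linear independence of the products
  have hPind : LinearIndependent K P := by
    refine BEI2.linIndep_of_leading key key_inj μ hμinj P (fun M => ?_) (fun M => ?_)
    · show MvPolynomial.coeff (μ M) ((M.1.map f).prod) = 1
      rw [hmapmap M]
      exact coeff_prod_leading K _ (hltM M)
    · show ∀ ν ∈ ((M.1.map f).prod).support, key ν ≤ key (μ M)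
      rw [hmapmap M]
      exact support_prod_le K _ (hltM M)
  -- span identification
  have hsetpow : Set.range P = (Set.range f) ^ m := by
    ext x
    rw [mem_range_pow]
    constructor
    · rintro ⟨M, rfl⟩; exact ⟨M.1, M.2, rfl⟩
    · rintro ⟨M, hc, rfl⟩; exact ⟨⟨M, hc⟩, rfl⟩
  have hspan : (binomialEdgeIdeal K n G) ^ m = Ideal.span (Set.range P) := by
    rw [bei_span K G, hsetpow]
    exact Submodule.span_pow _ m
  -- homogeneity of the products
  have hPhom : ∀ x ∈ Set.range P, MvPolynomial.IsHomogeneous x d := by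
    rintro x ⟨M, rfl⟩
    have h1 := prod_homog K (M.1.map Subtype.val)
    rw [Multiset.card_map, M.2] at h1
    show ((M.1.map f).prod).IsHomogeneous d
    rw [hmapmap M]
    exact h1
  -- the generator family from the resolution
  set g : Fin (β 0 d) → MvPolynomial (Fin n ⊕ Fin n) K :=
    fun t => F.ε (Finsupp.single ⟨d, t⟩ 1) with hg
  -- each g t lies in the ideal and is homogeneous of degree d
  have hgI : ∀ t, g t ∈ (binomialEdgeIdeal K n G) ^ m := by
    intro t
    rw [← F.range_ε]
    exact ⟨_, rfl⟩
  have hgh : ∀ t, (g t).IsHomogeneous d := fun t => F.homog_ε d t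
  -- linear independence of the g's
  have hgind : LinearIndependent K g := by
    rw [Fintype.linearIndependent_iff]
    intro cc hcc
    set v : GradedFreeMod (MvPolynomial (Fin n ⊕ Fin n) K) (β 0) :=
      ∑ t : Fin (β 0 d), Finsupp.single ⟨d, t⟩ (C (cc t)) with hv
    have hεv : F.ε v = 0 := by
      rw [hv, map_sum, ← hcc]
      refine Finset.sum_congr rfl fun t _ => ?_
      rw [show (Finsupp.single (⟨d, t⟩ : Σ j, Fin (β 0 j))
            (C (cc t) : MvPolynomial (Fin n ⊕ Fin n) K))
          = (C (cc t) : MvPolynomial (Fin n ⊕ Fin n) K) • Finsupp.single ⟨d, t⟩ 1 by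
          rw [Finsupp.smul_single', mul_one],
        map_smul, smul_eq_mul, ← MvPolynomial.smul_eq_C_mul]
    have hker : v ∈ LinearMap.ker F.ε := hεv
    rw [← F.exact_zero] at hker
    obtain ⟨w, hw⟩ := hker
    intro t0
    have h1 : v ⟨d, t0⟩ = C (cc t0) := by
      rw [hv, Finsupp.finset_sum_apply]
      rw [Finset.sum_eq_single t0]
      · rw [Finsupp.single_eq_same]
      · intro t _ ht
        exact Finsupp.single_eq_of_ne' (by simp [ht])
      · intro h; exact absurd (Finset.mem_univ t0) h
    have h3 : constantCoeff ((F.d 0 w) ⟨d, t0⟩) = 0 := by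
      have hw' : F.d 0 w = w.sum (fun a r => r • F.d 0 (Finsupp.single a 1)) := by
        conv_lhs => rw [← Finsupp.sum_single w]
        rw [map_finsuppSum]
        refine Finsupp.sum_congr fun a _ => ?_
        rw [← map_smul, Finsupp.smul_single', mul_one]
      rw [hw', Finsupp.sum, Finsupp.finset_sum_apply, map_sum]
      refine Finset.sum_eq_zero fun a _ => ?_
      rw [Finsupp.smul_apply, smul_eq_mul, map_mul]
      rcases a with ⟨j, s⟩
      rcases le_or_gt j d with hj | hj
      · rw [F.minimal_d 0 j s d t0 hj]
        simp
      · have hhom : (F.d 0 (Finsupp.single ⟨j, s⟩ 1) ⟨d, t0⟩).IsHomogeneous (j - d) :=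
          F.homog_d 0 j s d t0
        have : constantCoeff (F.d 0 (Finsupp.single ⟨j, s⟩ 1) ⟨d, t0⟩) = 0 := by
          rw [MvPolynomial.constantCoeff_eq]
          exact hhom.coeff_eq_zero (by simp; omega)
        rw [this, mul_zero]
    have h4 : constantCoeff (v ⟨d, t0⟩) = 0 := by
      rw [hw] at h3
      exact h3
    rw [h1] at h4
    simpa using h4
  -- span of g equals span of P
  have hg_in : ∀ t, g t ∈ Submodule.span K (Set.range P) := by
    intro t
    have h1 : g t = MvPolynomial.homogeneousComponent d (g t) := by
      rw [MvPolynomial.homogeneousComponent_of_mem (hgh t), if_pos rfl]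
    rw [h1]
    refine BEI2.span_homog_comp_mem hPhom ?_
    rw [← hspan]
    exact hgI t
  have hP_in : ∀ M, P M ∈ Submodule.span K (Set.range g) := by
    intro M
    have hPI : P M ∈ (binomialEdgeIdeal K n G) ^ m := by
      rw [hspan]
      exact Ideal.subset_span ⟨M, rfl⟩
    rw [← F.range_ε] at hPI
    obtain ⟨v, hv⟩ := hPI
    have hPM : P M = MvPolynomial.homogeneousComponent d (P M) := by
      rw [MvPolynomial.homogeneousComponent_of_mem (hPhom _ ⟨M, rfl⟩), if_pos rfl]
    have hεv : F.ε v = v.sum (fun a r => r * F.ε (Finsupp.single a 1)) := by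
      conv_lhs => rw [← Finsupp.sum_single v]
      rw [map_finsuppSum]
      refine Finsupp.sum_congr fun a _ => ?_
      rw [← smul_eq_mul, ← map_smul, Finsupp.smul_single', mul_one]
    rw [hPM, ← hv, hεv, Finsupp.sum, map_sum]
    refine Submodule.sum_mem _ fun a _ => ?_
    rcases a with ⟨j, s⟩
    have hGa : (F.ε (Finsupp.single ⟨j, s⟩ 1)).IsHomogeneous j := F.homog_ε j s
    rcases lt_trichotomy j d with hj | hj | hj
    · have hGa0 : F.ε (Finsupp.single ⟨j, s⟩ 1) = 0 := by
        have hmem0 : F.ε (Finsupp.single ⟨j, s⟩ 1) ∈ LinearMap.range F.ε := ⟨_, rfl⟩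
        have hmem1 : F.ε (Finsupp.single ⟨j, s⟩ 1) ∈ (binomialEdgeIdeal K n G) ^ m :=
          (SetLike.ext_iff.mp F.range_ε _).mp hmem0
        have hmem : F.ε (Finsupp.single ⟨j, s⟩ 1) ∈ Ideal.span (Set.range P) :=
          (SetLike.ext_iff.mp hspan _).mp hmem1
        have h5 := BEI2.span_homog_comp_zero hPhom hmem hj
        rwa [MvPolynomial.homogeneousComponent_of_mem (hGa), if_pos rfl] at h5
      rw [hGa0, mul_zero, map_zero]
      exact Submodule.zero_mem _
    · subst hj
      rw [BEI2.comp_mul_eq _ _ hGa, ← MvPolynomial.smul_eq_C_mul]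
      exact Submodule.smul_mem _ _ (Submodule.subset_span ⟨s, rfl⟩)
    · rw [BEI2.comp_mul_lt hj _ _ hGa]
      exact Submodule.zero_mem _
  have hspaneq : Submodule.span K (Set.range g) = Submodule.span K (Set.range P) := by
    apply le_antisymm
    · rw [Submodule.span_le]; rintro x ⟨t, rfl⟩; exact hg_in t
    · rw [Submodule.span_le]; rintro x ⟨M, rfl⟩; exact hP_in M
  -- counting
  have e1 : Module.finrank K (Submodule.span K (Set.range g)) = β 0 d := by
    rw [finrank_span_eq_card hgind, Fintype.card_fin]
  have e2 : Module.finrank K (Submodule.span K (Set.range P)) = Fintype.card (Sym (EdgeT G) m) := by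
    rw [finrank_span_eq_card hPind]
  have e3 : β 0 d = Fintype.card (Sym (EdgeT G) m) := by
    rw [← e1, hspaneq, e2]
  rw [e3, Sym.card_sym_eq_choose, edge_card, Nat.card_eq_fintype_card]
end
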